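/- Lemma 5 (Convergence for non-transmitted hypotheses). Run the partial-information algorithm with self-awareness, under Assumptions 1 and 2. For θ, θ′ ∈ Θ∖{θ_TX}, define q_{k,i}(θ,θ′) := log(μ_{k,i}(θ)/μ_{k,i}(θ′)). Then for every agent k there exists a random variable q_{k,∞}(θ,θ′), namely the almost surely convergent random series q_{k,∞}(θ,θ′) = Σ_{j=1}^∞ a_{kk}^j log(L_k(ξ_{k,j}|θ)/L_k(ξ_{k,j}|θ′)), such that q_{k,i}(θ,θ′) converges in distribution to q_{k,∞}(θ,θ′) as i → ∞. -/

import Mathlib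

open MeasureTheory ProbabilityTheory Filter Topology

open scoped ENNReal NNReal

lemma aux_log_exp_ratio (A B Z : ℝ) (hZ : 0 < Z) :
    Real.log ((Real.exp A / Z) / (Real.exp B / Z)) = A - B := by
  have h : (Real.exp A / Z) / (Real.exp B / Z) = Real.exp A / Real.exp B := by
    field_simp
  rw [h, ← Real.exp_sub, Real.log_exp]

lemma aux_pi_law {Ω : Type} [MeasurableSpace Ω] (P : Measure Ω) [IsProbabilityMeasure P]
    (f : ℕ → Ω → ℝ) (hmeas : ∀ j, Measurable (f j))
    (hindep : iIndepFun f P)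
    (m : Measure ℝ) [IsProbabilityMeasure m] (hlaw : ∀ j, Measure.map (f j) P = m)
    (n : ℕ) (e : Fin n → ℕ) (he : Function.Injective e) :
    Measure.map (fun ω (j : Fin n) => f (e j) ω) P = Measure.pi (fun _ => m) := by
  classical
  refine (Measure.pi_eq fun s hs => ?_).symm
  have hΦ : Measurable (fun ω (j : Fin n) => f (e j) ω) :=
    measurable_pi_lambda _ fun j => hmeas (e j)
  rw [Measure.map_apply hΦ (MeasurableSet.univ_pi hs)]
  set sets : ℕ → Set ℝ := fun n' => if h : ∃ j, e j = n' then s h.choose else Set.univ with hsets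
  have hsets_e : ∀ j, sets (e j) = s j := by
    intro j
    have h : ∃ j', e j' = e j := ⟨j, rfl⟩
    simp only [hsets, dif_pos h]
    exact congrArg s (he h.choose_spec)
  have hpre : (fun ω (j : Fin n) => f (e j) ω) ⁻¹' Set.pi Set.univ s
      = ⋂ n' ∈ Finset.image e Finset.univ, f n' ⁻¹' sets n' := by
    ext ω
    simp only [Set.mem_preimage, Set.mem_pi, Set.mem_univ, true_implies, Set.mem_iInter,
      Finset.mem_image, Finset.mem_univ, true_and]
    constructor
    · rintro h n' ⟨j, rfl⟩
      rw [hsets_e]; exact h j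
    · intro h j
      have := h (e j) ⟨j, rfl⟩
      rwa [hsets_e] at this
  have hsetsmeas : ∀ n', MeasurableSet (sets n') := by
    intro n'
    by_cases h : ∃ j, e j = n'
    · simp only [hsets, dif_pos h]; exact hs _
    · simp only [hsets, dif_neg h]; exact MeasurableSet.univ
  rw [hpre, hindep.measure_inter_preimage_eq_mul _ (fun n' _ => hsetsmeas n'),
    Finset.prod_image (fun x _ y _ hxy => he hxy)]
  refine Finset.prod_congr rfl fun j _ => ?_
  rw [hsets_e, ← hlaw (e j), Measure.map_apply (hmeas (e j)) (hs j)]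

lemma aux_ae_summable {Ω : Type} [MeasurableSpace Ω] (P : Measure Ω) [IsProbabilityMeasure P]
    (f : ℕ → Ω → ℝ) (hmeas : ∀ j, Measurable (f j)) (r : ℝ) (h0 : 0 ≤ r) (h1 : r < 1)
    (C : ℝ≥0∞) (hC : C ≠ ⊤) (hbound : ∀ j, ∫⁻ ω, ‖f (j + 1) ω‖₊ ∂P = C) :
    ∀ᵐ ω ∂P, Summable (fun j => r ^ (j + 1) * f (j + 1) ω) := by
  have hR : ENNReal.ofReal r < 1 := by
    rw [← ENNReal.ofReal_one]
    exact (ENNReal.ofReal_lt_ofReal_iff_of_nonneg h0).mpr h1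
  have hmeas' : ∀ j : ℕ, Measurable fun ω => (‖r ^ (j + 1) * f (j + 1) ω‖₊ : ℝ≥0∞) :=
    fun j => (measurable_const.mul (hmeas (j + 1))).nnnorm.coe_nnreal_ennreal
  have hterm : ∀ j : ℕ, ∫⁻ ω, (‖r ^ (j + 1) * f (j + 1) ω‖₊ : ℝ≥0∞) ∂P
      = ENNReal.ofReal r ^ (j + 1) * C := by
    intro j
    have h : ∀ ω, (‖r ^ (j + 1) * f (j + 1) ω‖₊ : ℝ≥0∞)
        = ENNReal.ofReal r ^ (j + 1) * (‖f (j + 1) ω‖₊ : ℝ≥0∞) := by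
      intro ω
      rw [nnnorm_mul, ENNReal.coe_mul, ← ENNReal.ofReal_pow h0]
      congr 1
      exact Real.enorm_eq_ofReal (pow_nonneg h0 _)
    simp_rw [h]
    rw [lintegral_const_mul _ ((hmeas (j + 1)).nnnorm.coe_nnreal_ennreal), hbound j]
  have hkey : ∫⁻ ω, ∑' j : ℕ, (‖r ^ (j + 1) * f (j + 1) ω‖₊ : ℝ≥0∞) ∂P ≠ ⊤ := by
    rw [lintegral_tsum fun j => (hmeas' j).aemeasurable]
    simp_rw [hterm]
    have hle : ∑' j : ℕ, ENNReal.ofReal r ^ (j + 1) * C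
        ≤ (1 - ENNReal.ofReal r)⁻¹ * C := by
      rw [ENNReal.tsum_mul_right, ← ENNReal.tsum_geometric (ENNReal.ofReal r)]
      refine mul_le_mul_left (ENNReal.tsum_le_tsum fun j => ?_) C
      exact pow_le_pow_of_le_one zero_le hR.le (Nat.le_succ j)
    refine ne_top_of_le_ne_top ?_ hle
    exact ENNReal.mul_ne_top (ENNReal.inv_ne_top.mpr (tsub_pos_of_lt hR).ne') hC
  have hae := ae_lt_top' (Measurable.aemeasurable (by
      exact Measurable.ennreal_tsum fun j => hmeas' j)) hkey
  filter_upwards [hae] with ω hω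
  have hsummable : Summable fun j => ‖r ^ (j + 1) * f (j + 1) ω‖₊ :=
    ENNReal.tsum_coe_ne_top_iff_summable.mp hω.ne
  have hs2 := NNReal.summable_coe.mpr hsummable
  simp only [coe_nnnorm] at hs2
  exact Summable.of_norm hs2

theorem convergence_for_nontransmitted_hypotheses
    {Ω : Type} [mΩ : MeasurableSpace Ω] (P : Measure Ω) [IsProbabilityMeasure P]
    (K H : ℕ) (hK : 0 < K) (hH : 2 ≤ H)
    (X : Fin K → Type) [∀ k, MeasurableSpace (X k)]
    (ν : ∀ k, Measure (X k))
    (L : ∀ k : Fin K, Fin H → X k → ℝ)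
    (θ0 : Fin H)
    (hLpos : ∀ k θ x, 0 < L k θ x)
    (hLmeas : ∀ k θ, Measurable (L k θ))
    (hLdens : ∀ k θ, ∫ x, L k θ x ∂(ν k) = 1)
    (ξ : ∀ k : Fin K, ℕ → Ω → X k)
    (hξmeas : ∀ k i, Measurable (ξ k i))
    (hξdist : ∀ k (i : ℕ), 1 ≤ i →
      Measure.map (ξ k i) P = (ν k).withDensity (fun x => ENNReal.ofReal (L k θ0 x)))
    (hξindep : iIndepFun
      (fun (i : ℕ) (ω : Ω) (k : Fin K) => ξ k (i + 1) ω) P)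
    (hKL : ∀ k θ θ',
      Integrable (fun x => L k θ x * Real.log (L k θ x / L k θ' x)) (ν k))
    (a : Fin K → Fin K → ℝ)
    (ha_nonneg : ∀ ℓ k, 0 ≤ a ℓ k)
    (ha_stoch : ∀ k, ∑ ℓ, a ℓ k = 1)
    (ha_prim : ∃ n : ℕ, ∀ ℓ k, 0 < ((Matrix.of a) ^ n) ℓ k)
    (v : Fin K → ℝ)
    (hv_pos : ∀ ℓ, 0 < v ℓ)
    (hv_sum : ∑ ℓ, v ℓ = 1)
    (hv_eig : ∀ ℓ, ∑ k, a ℓ k * v k = v ℓ)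
    (ha_self : ∀ k, 0 < a k k)
    (ha_lt : ∀ k, a k k < 1)
    (θTX : Fin H)
    (μb ψ ψh : Fin K → ℕ → Fin H → Ω → ℝ)
    (μinit : Fin K → Fin H → ℝ)
    (hμinit_pos : ∀ k θ, 0 < μinit k θ)
    (hμinit_sum : ∀ k, ∑ θ, μinit k θ = 1)
    (hμb0 : ∀ k θ ω, μb k 0 θ ω = μinit k θ)
    (hψ : ∀ k (i : ℕ) θ ω, ψ k (i + 1) θ ω =
      μb k i θ ω * L k θ (ξ k (i + 1) ω) /
        ∑ θ', μb k i θ' ω * L k θ' (ξ k (i + 1) ω))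
    (hψh_tx : ∀ k (i : ℕ) ω, ψh k (i + 1) θTX ω = ψ k (i + 1) θTX ω)
    (hψh_ntx : ∀ k (i : ℕ) θ ω, θ ≠ θTX →
      ψh k (i + 1) θ ω = (1 - ψ k (i + 1) θTX ω) / ((H : ℝ) - 1))
    (hcomb : ∀ k (i : ℕ) θ ω, μb k (i + 1) θ ω =
      Real.exp (a k k * Real.log (ψ k (i + 1) θ ω) +
          ∑ ℓ ∈ Finset.univ.erase k, a ℓ k * Real.log (ψh ℓ (i + 1) θ ω)) /
        ∑ θ', Real.exp (a k k * Real.log (ψ k (i + 1) θ' ω) +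
          ∑ ℓ ∈ Finset.univ.erase k, a ℓ k * Real.log (ψh ℓ (i + 1) θ' ω)))
    (k : Fin K) (θ θ' : Fin H) (hθ : θ ≠ θTX) (hθ' : θ' ≠ θTX) :
    ∃ qinf : Ω → ℝ,
      (∀ᵐ ω ∂P, Tendsto
        (fun (n : ℕ) => ∑ j ∈ Finset.Icc 1 n,
          (a k k) ^ j * Real.log (L k θ (ξ k j ω) / L k θ' (ξ k j ω)))
        atTop (𝓝 (qinf ω))) ∧
      (∀ g : BoundedContinuousFunction ℝ ℝ,
        Tendsto (fun (i : ℕ) => ∫ ω, g (Real.log (μb k i θ ω / μb k i θ' ω)) ∂P)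
          atTop (𝓝 (∫ ω, g (qinf ω) ∂P))) := by
  classical
  have hHpos : 0 < H := lt_of_lt_of_le two_pos hH
  haveI : Nonempty (Fin H) := ⟨⟨0, hHpos⟩⟩
  set lf : ℕ → Ω → ℝ := fun j ω => Real.log (L k θ (ξ k j ω) / L k θ' (ξ k j ω)) with hlf
  -- measurability
  have hlrmeas : Measurable (fun x => Real.log (L k θ x / L k θ' x)) :=
    Real.measurable_log.comp ((hLmeas k θ).div (hLmeas k θ'))
  have hlfmeas : ∀ j, Measurable (lf j) := fun j => hlrmeas.comp (hξmeas k j)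
  -- positivity
  have hμpos : ∀ i θb ω, 0 < μb k i θb ω := by
    intro i
    induction i with
    | zero => intro θb ω; rw [hμb0]; exact hμinit_pos k θb
    | succ i ih =>
      intro θb ω
      rw [hcomb]
      exact div_pos (Real.exp_pos _)
        (Finset.sum_pos (fun θc _ => Real.exp_pos _) Finset.univ_nonempty)
  have hψden : ∀ i ω, 0 < ∑ θc, μb k i θc ω * L k θc (ξ k (i + 1) ω) := fun i ω =>
    Finset.sum_pos (fun θc _ => mul_pos (hμpos i θc ω) (hLpos k θc _)) Finset.univ_nonempty
  have hψpos : ∀ i θb ω, 0 < ψ k (i + 1) θb ω := by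
    intro i θb ω
    rw [hψ]
    exact div_pos (mul_pos (hμpos i θb ω) (hLpos k θb _)) (hψden i ω)
  -- the one-step recursion for the log belief ratio
  have hrec : ∀ i ω, Real.log (μb k (i + 1) θ ω / μb k (i + 1) θ' ω)
      = a k k * (Real.log (μb k i θ ω / μb k i θ' ω) + lf (i + 1) ω) := by
    intro i ω
    have hZ : 0 < ∑ θc, Real.exp (a k k * Real.log (ψ k (i + 1) θc ω)
        + ∑ ℓ ∈ Finset.univ.erase k, a ℓ k * Real.log (ψh ℓ (i + 1) θc ω)) :=
      Finset.sum_pos (fun θc _ => Real.exp_pos _) Finset.univ_nonempty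
    rw [hcomb k i θ ω, hcomb k i θ' ω, aux_log_exp_ratio _ _ _ hZ]
    have hsum_eq : ∑ ℓ ∈ Finset.univ.erase k, a ℓ k * Real.log (ψh ℓ (i + 1) θ ω)
        = ∑ ℓ ∈ Finset.univ.erase k, a ℓ k * Real.log (ψh ℓ (i + 1) θ' ω) :=
      Finset.sum_congr rfl fun ℓ _ => by
        rw [hψh_ntx ℓ i θ ω hθ, hψh_ntx ℓ i θ' ω hθ']
    have hlogψ : Real.log (ψ k (i + 1) θ ω) - Real.log (ψ k (i + 1) θ' ω)
        = Real.log (μb k i θ ω / μb k i θ' ω) + lf (i + 1) ω := by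
      rw [hψ k i θ ω, hψ k i θ' ω]
      have hD := hψden i ω
      rw [Real.log_div (mul_pos (hμpos i θ ω) (hLpos k θ _)).ne' hD.ne',
        Real.log_div (mul_pos (hμpos i θ' ω) (hLpos k θ' _)).ne' hD.ne',
        Real.log_mul (hμpos i θ ω).ne' (hLpos k θ _).ne',
        Real.log_mul (hμpos i θ' ω).ne' (hLpos k θ' _).ne',
        Real.log_div (hμpos i θ ω).ne' (hμpos i θ' ω).ne']
      show _ = _ + Real.log (L k θ (ξ k (i + 1) ω) / L k θ' (ξ k (i + 1) ω))
      rw [Real.log_div (hLpos k θ _).ne' (hLpos k θ' _).ne']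
      ring
    rw [hsum_eq, ← hlogψ]
    ring
  -- closed form
  have hq : ∀ i ω, Real.log (μb k i θ ω / μb k i θ' ω)
      = a k k ^ i * Real.log (μinit k θ / μinit k θ')
        + ∑ j ∈ Finset.Icc 1 i, a k k ^ (i + 1 - j) * lf j ω := by
    intro i
    induction i with
    | zero =>
      intro ω
      rw [hμb0 k θ ω, hμb0 k θ' ω]
      simp [Finset.Icc_eq_empty (by omega : ¬(1:ℕ) ≤ 0)]
    | succ i ih =>
      intro ω
      rw [hrec i ω, ih ω, Finset.sum_Icc_succ_top (Nat.le_add_left 1 i)]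
      have hterm : ∀ j ∈ Finset.Icc 1 i,
          a k k ^ (i + 1 + 1 - j) * lf j ω = a k k * (a k k ^ (i + 1 - j) * lf j ω) := by
        intro j hj
        have hji : j ≤ i := (Finset.mem_Icc.mp hj).2
        have h1 : i + 1 + 1 - j = (i + 1 - j) + 1 := by omega
        rw [h1, pow_succ]; ring
      rw [Finset.sum_congr rfl hterm, ← Finset.mul_sum]
      have h11 : i + 1 + 1 - (i + 1) = 1 := by omega
      rw [h11, pow_one]
      ring
  -- identical distribution
  have hmapj : ∀ j : ℕ, 1 ≤ j → Measure.map (lf j) P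
      = Measure.map (fun x => Real.log (L k θ x / L k θ' x))
          ((ν k).withDensity fun x => ENNReal.ofReal (L k θ0 x)) := by
    intro j hj
    rw [← hξdist k j hj, Measure.map_map hlrmeas (hξmeas k j)]
    rfl
  set mm : Measure ℝ := Measure.map (fun x => Real.log (L k θ x / L k θ' x))
      ((ν k).withDensity fun x => ENNReal.ofReal (L k θ0 x)) with hmm
  haveI : IsProbabilityMeasure ((ν k).withDensity fun x => ENNReal.ofReal (L k θ0 x)) := by
    rw [← hξdist k 1 le_rfl]
    exact Measure.isProbabilityMeasure_map (hξmeas k 1).aemeasurable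
  haveI : IsProbabilityMeasure mm := Measure.isProbabilityMeasure_map hlrmeas.aemeasurable
  -- integrability of the log-likelihood ratio under the true distribution
  have hDmeas : Measurable fun x => ENNReal.ofReal (L k θ0 x) :=
    ENNReal.measurable_ofReal.comp (hLmeas k θ0)
  have hIntD : Integrable (fun x => Real.log (L k θ x / L k θ' x))
      ((ν k).withDensity fun x => ENNReal.ofReal (L k θ0 x)) := by
    rw [integrable_withDensity_iff hDmeas (ae_of_all _ fun x => ENNReal.ofReal_lt_top)]
    have hsplit : ∀ x : X k, (-(L k θ0 x * Real.log (L k θ0 x / L k θ x)))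
          + L k θ0 x * Real.log (L k θ0 x / L k θ' x)
        = Real.log (L k θ x / L k θ' x) * (ENNReal.ofReal (L k θ0 x)).toReal := by
      intro x
      rw [ENNReal.toReal_ofReal (hLpos k θ0 x).le,
        Real.log_div (hLpos k θ x).ne' (hLpos k θ' x).ne',
        Real.log_div (hLpos k θ0 x).ne' (hLpos k θ x).ne',
        Real.log_div (hLpos k θ0 x).ne' (hLpos k θ' x).ne']
      ring
    exact (((hKL k θ0 θ).neg).add (hKL k θ0 θ')).congr (ae_of_all _ hsplit)
  have hCfin : ∫⁻ x : ℝ, (‖x‖₊ : ℝ≥0∞) ∂mm ≠ ⊤ := by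
    rw [hmm, lintegral_map measurable_nnnorm.coe_nnreal_ennreal hlrmeas]
    exact hIntD.2.ne
  have hCbound : ∀ j : ℕ, ∫⁻ ω, (‖lf (j + 1) ω‖₊ : ℝ≥0∞) ∂P = ∫⁻ x : ℝ, (‖x‖₊ : ℝ≥0∞) ∂mm := by
    intro j
    rw [← hmapj (j + 1) (Nat.le_add_left 1 j),
      lintegral_map measurable_nnnorm.coe_nnreal_ennreal (hlfmeas (j + 1))]
  -- a.e. summability of the limiting series
  have hsum : ∀ᵐ ω ∂P, Summable (fun j => a k k ^ (j + 1) * lf (j + 1) ω) :=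
    aux_ae_summable P lf hlfmeas (a k k) (ha_self k).le (ha_lt k) _ hCfin hCbound
  -- partial sums over Icc versus range
  have hIcc : ∀ (c : ℕ → ℝ) (n : ℕ) (F : ℕ → ℝ), ∑ j ∈ Finset.Icc 1 n, c j * F j
      = ∑ j ∈ Finset.range n, c (j + 1) * F (j + 1) := by
    intro c n F
    rw [← Finset.Ico_add_one_right_eq_Icc, Finset.sum_Ico_eq_sum_range]
    have hn1 : ∀ nn : ℕ, nn + 1 - 1 = nn := fun nn => by omega
    simp only [hn1]
    exact Finset.sum_congr rfl fun j _ => by rw [Nat.add_comm 1 j]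
  have h_tendsto : ∀ᵐ ω ∂P, Tendsto
      (fun n : ℕ => ∑ j ∈ Finset.Icc 1 n, a k k ^ j * lf j ω) atTop
      (𝓝 (∑' j : ℕ, a k k ^ (j + 1) * lf (j + 1) ω)) := by
    filter_upwards [hsum] with ω hω
    have h1 := hω.hasSum.tendsto_sum_nat
    exact Tendsto.congr (fun n => (hIcc (fun j => a k k ^ j) n (fun j => lf j ω)).symm) h1
  -- independence of the log-likelihood ratios
  have hindepL : iIndepFun
      (fun j ω => lf (j + 1) ω) P := by
    have := hξindep.comp (fun j (x : ∀ k', X k') => Real.log (L k θ (x k) / L k θ' (x k)))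
      (fun j => hlrmeas.comp (measurable_pi_apply k))
    exact this
  refine ⟨fun ω => ∑' j : ℕ, a k k ^ (j + 1) * lf (j + 1) ω, h_tendsto, fun g => ?_⟩
  -- swap law of the reversed weighted sum
  have hswap : ∀ i : ℕ, ∫ ω, g (a k k ^ i * Real.log (μinit k θ / μinit k θ')
        + ∑ j ∈ Finset.Icc 1 i, a k k ^ (i + 1 - j) * lf j ω) ∂P
      = ∫ ω, g (a k k ^ i * Real.log (μinit k θ / μinit k θ')
        + ∑ j ∈ Finset.Icc 1 i, a k k ^ j * lf j ω) ∂P := by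
    intro i
    set c := a k k ^ i * Real.log (μinit k θ / μinit k θ') with hc
    set G : (Fin i → ℝ) → ℝ := fun x => ∑ j : Fin i, a k k ^ ((j : ℕ) + 1) * x j with hG
    have hGcont : Continuous G := by
      rw [hG]
      exact continuous_finset_sum _ fun j _ => continuous_const.mul (continuous_apply j)
    have hfcont : Continuous fun x : Fin i → ℝ => g (c + G x) :=
      g.continuous.comp (continuous_const.add hGcont)
    have hinj2 : Function.Injective (fun j : Fin i => i - 1 - (j : ℕ)) := by
      intro x y hxy
      have hx := x.isLt; have hy := y.isLt
      exact Fin.ext (by simp only at hxy; omega)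
    have hlaw1 : Measure.map (fun ω (j : Fin i) => lf ((j : ℕ) + 1) ω) P
        = Measure.pi (fun _ : Fin i => mm) :=
      aux_pi_law P (fun j ω => lf (j + 1) ω) (fun j => hlfmeas (j + 1)) hindepL mm
        (fun j => hmapj (j + 1) (Nat.le_add_left 1 j)) i (fun j : Fin i => (j : ℕ))
        Fin.val_injective
    have hlaw2 : Measure.map (fun ω (j : Fin i) => lf ((i - 1 - (j : ℕ)) + 1) ω) P
        = Measure.pi (fun _ : Fin i => mm) :=
      aux_pi_law P (fun j ω => lf (j + 1) ω) (fun j => hlfmeas (j + 1)) hindepL mm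
        (fun j => hmapj (j + 1) (Nat.le_add_left 1 j)) i (fun j : Fin i => i - 1 - (j : ℕ))
        hinj2
    have hΦ1 : Measurable fun ω (j : Fin i) => lf ((j : ℕ) + 1) ω :=
      measurable_pi_lambda _ fun j => hlfmeas _
    have hΦ2 : Measurable fun ω (j : Fin i) => lf ((i - 1 - (j : ℕ)) + 1) ω :=
      measurable_pi_lambda _ fun j => hlfmeas _
    have hs1 : ∀ ω, G (fun j : Fin i => lf ((j : ℕ) + 1) ω)
        = ∑ j ∈ Finset.Icc 1 i, a k k ^ j * lf j ω := by
      intro ω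
      simp only [hG]
      rw [hIcc (fun j => a k k ^ j) i (fun j => lf j ω)]
      exact Fin.sum_univ_eq_sum_range (fun j => a k k ^ (j + 1) * lf (j + 1) ω) i
    have hs2 : ∀ ω, G (fun j : Fin i => lf ((i - 1 - (j : ℕ)) + 1) ω)
        = ∑ j ∈ Finset.Icc 1 i, a k k ^ (i + 1 - j) * lf j ω := by
      intro ω
      simp only [hG]
      rw [hIcc (fun j => a k k ^ (i + 1 - j)) i (fun j => lf j ω)]
      rw [Fin.sum_univ_eq_sum_range (fun j => a k k ^ (j + 1) * lf ((i - 1 - j) + 1) ω) i]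
      calc ∑ j ∈ Finset.range i, a k k ^ (j + 1) * lf ((i - 1 - j) + 1) ω
          = ∑ j ∈ Finset.range i, a k k ^ (i - (i - 1 - j)) * lf ((i - 1 - j) + 1) ω := by
            refine Finset.sum_congr rfl fun j hj => ?_
            have hji := Finset.mem_range.mp hj
            have h1 : i - (i - 1 - j) = j + 1 := by omega
            rw [h1]
        _ = ∑ j ∈ Finset.range i, a k k ^ (i - j) * lf (j + 1) ω :=
            Finset.sum_range_reflect (fun j => a k k ^ (i - j) * lf (j + 1) ω) i
        _ = ∑ j ∈ Finset.range i, a k k ^ (i + 1 - (j + 1)) * lf (j + 1) ω := by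
            refine Finset.sum_congr rfl fun j hj => ?_
            have h2 : i + 1 - (j + 1) = i - j := by omega
            rw [h2]
    calc ∫ ω, g (c + ∑ j ∈ Finset.Icc 1 i, a k k ^ (i + 1 - j) * lf j ω) ∂P
        = ∫ ω, g (c + G fun j : Fin i => lf ((i - 1 - (j : ℕ)) + 1) ω) ∂P :=
          integral_congr_ae (ae_of_all _ fun ω =>
            congrArg (fun t => g t) (congrArg (fun t => c + t) (hs2 ω).symm))
      _ = ∫ x, g (c + G x)
            ∂(Measure.map (fun ω (j : Fin i) => lf ((i - 1 - (j : ℕ)) + 1) ω) P) :=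
          (integral_map hΦ2.aemeasurable hfcont.aestronglyMeasurable).symm
      _ = ∫ x, g (c + G x) ∂(Measure.pi fun _ : Fin i => mm) := by rw [hlaw2]
      _ = ∫ x, g (c + G x)
            ∂(Measure.map (fun ω (j : Fin i) => lf ((j : ℕ) + 1) ω) P) := by rw [hlaw1]
      _ = ∫ ω, g (c + G fun j : Fin i => lf ((j : ℕ) + 1) ω) ∂P :=
          integral_map hΦ1.aemeasurable hfcont.aestronglyMeasurable
      _ = ∫ ω, g (c + ∑ j ∈ Finset.Icc 1 i, a k k ^ j * lf j ω) ∂P :=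
          integral_congr_ae (ae_of_all _ fun ω =>
            congrArg (fun t => g t) (congrArg (fun t => c + t) (hs1 ω)))
  have hconv : ∀ i : ℕ, ∫ ω, g (Real.log (μb k i θ ω / μb k i θ' ω)) ∂P
      = ∫ ω, g (a k k ^ i * Real.log (μinit k θ / μinit k θ')
        + ∑ j ∈ Finset.Icc 1 i, a k k ^ j * lf j ω) ∂P := by
    intro i
    rw [← hswap i]
    exact integral_congr_ae (ae_of_all _ fun ω => congrArg (fun t => g t) (hq i ω))
  have hTmeas : ∀ i : ℕ, Measurable fun ω => a k k ^ i * Real.log (μinit k θ / μinit k θ')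
      + ∑ j ∈ Finset.Icc 1 i, a k k ^ j * lf j ω :=
    fun i => measurable_const.add (Finset.measurable_sum _ fun j _ => (hlfmeas j).const_mul _)
  refine Tendsto.congr (fun i => (hconv i).symm) ?_
  refine tendsto_integral_of_dominated_convergence (fun _ => ‖g‖)
    (fun i => (g.continuous.measurable.comp (hTmeas i)).aestronglyMeasurable)
    (integrable_const _)
    (fun i => ae_of_all _ fun ω => g.norm_coe_le_norm _) ?_
  filter_upwards [h_tendsto] with ω hω
  have h1 : Tendsto (fun i : ℕ => a k k ^ i * Real.log (μinit k θ / μinit k θ'))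
      atTop (𝓝 0) := by
    have h0 := tendsto_pow_atTop_nhds_zero_of_lt_one (ha_self k).le (ha_lt k)
    have := h0.mul_const (Real.log (μinit k θ / μinit k θ'))
    simpa using this
  have h2 := h1.add hω
  rw [zero_add] at h2
  exact (g.continuous.tendsto _).comp h2
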